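/- Let K ∈ ℕ, M ≥ K, N = 2M+1, and let p: ℝ → ℂ be continuous with support in [−K/2, K/2] with Φ_p(l/N) > 0 for all l. For k ∈ {−M,…,M} define the ALO pulse p̃°ᴹ_k(t) = (1/N) ∑_{l=0}^{2M} e^{−2πikl/N} (Zp)(t, l/N) / √(Φ_p(l/N)) for |t| ≤ M − K/2 (and 0 otherwise). Then the ALO pulses have local shift character: for every k with |k| < M and every t with |t| ≤ M − K/2 − |k|, one has p̃°ᴹ_k(t+k) = p̃°ᴹ_0(t). -/

import Mathlib

open MeasureTheory Complex Filter Topology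
open scoped Real ENNReal FourierTransform

noncomputable section

/-- The 1-periodic symbol `Φ_p(ν) = ∑_{k∈ℤ} |p̂(ν+k)|²` of `p`. -/
def symbolPhi (p : ℝ → ℂ) (ν : ℝ) : ℝ := ∑' k : ℤ, ‖𝓕 p (ν + k)‖ ^ 2

/-- The Zak transform `(Zp)(t,ν) = ∑_{n∈ℤ} p(t−n) e^{2πinν}`. -/
def zak (p : ℝ → ℂ) (t ν : ℝ) : ℂ :=
  ∑' n : ℤ, p (t - n) * Complex.exp (2 * (Real.pi : ℂ) * Complex.I * (n : ℂ) * (ν : ℂ))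

/-- The ALO pulse `p̃°ᴹ_k(t) = (1/N) ∑_{l=0}^{2M} e^{−2πikl/N} (Zp)(t,l/N)/√(Φ_p(l/N))`
for `|t| ≤ M − K/2` (and `0` otherwise), `N = 2M+1`. -/
def aloPulse (p : ℝ → ℂ) (K M : ℕ) (k : ℤ) (t : ℝ) : ℂ :=
  if |t| ≤ (M : ℝ) - (K : ℝ) / 2 then
    (1 / ((2 * M + 1 : ℕ) : ℂ)) *
      ∑ l ∈ Finset.range (2 * M + 1),
        Complex.exp (-2 * (Real.pi : ℂ) * Complex.I * (k : ℂ) * (l : ℂ)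
            / ((2 * M + 1 : ℕ) : ℂ)) *
          zak p t ((l : ℝ) / ((2 * M + 1 : ℕ) : ℝ)) /
            (Real.sqrt (symbolPhi p ((l : ℝ) / ((2 * M + 1 : ℕ) : ℝ))) : ℂ)
  else 0

lemma zak_shift (p : ℝ → ℂ) (t ν : ℝ) (k : ℤ) :
    zak p (t + k) ν = Complex.exp (2 * (Real.pi : ℂ) * Complex.I * (k : ℂ) * (ν : ℂ)) * zak p t ν := by
  unfold zak
  rw [← tsum_mul_left,
    ← (Equiv.addRight k).tsum_eq (fun n : ℤ => p (t + k - n) *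
      Complex.exp (2 * (Real.pi : ℂ) * Complex.I * (n : ℂ) * (ν : ℂ)))]
  refine tsum_congr fun m => ?_
  simp only [Equiv.coe_addRight]
  have h1 : t + (k : ℝ) - ((m + k : ℤ) : ℝ) = t - m := by push_cast; ring
  have h2 : 2 * (Real.pi : ℂ) * Complex.I * ((m + k : ℤ) : ℂ) * (ν : ℂ)
      = 2 * (Real.pi : ℂ) * Complex.I * (k : ℂ) * (ν : ℂ)
        + 2 * (Real.pi : ℂ) * Complex.I * (m : ℂ) * (ν : ℂ) := by push_cast; ring
  rw [h1, h2, Complex.exp_add]; ring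

/-- local shift character of the ALO pulses: for continuous `p` supported in
`[−K/2,K/2]`, `M ≥ K`, `N = 2M+1`, with `Φ_p(l/N) > 0` for all `l`, and every `k` with
`|k| < M` and `t` with `|t| ≤ M − K/2 − |k|`, one has `p̃°ᴹ_k(t+k) = p̃°ᴹ_0(t)`. -/
theorem stmt10 (K M : ℕ) (hMK : K ≤ M) (p : ℝ → ℂ) (hc : Continuous p)
    (hsupp : Function.support p ⊆ Set.Icc (-(K : ℝ) / 2) ((K : ℝ) / 2))
    (hΦpos : ∀ l ∈ Finset.range (2 * M + 1),
      0 < symbolPhi p ((l : ℝ) / ((2 * M + 1 : ℕ) : ℝ))) :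
    ∀ k : ℤ, |k| < (M : ℤ) → ∀ t : ℝ, |t| ≤ (M : ℝ) - (K : ℝ) / 2 - |(k : ℝ)| →
      aloPulse p K M k (t + k) = aloPulse p K M 0 t := by
  intro k hk t ht
  have hk0 : (0 : ℝ) ≤ |(k : ℝ)| := abs_nonneg _
  have ht1 : |t| ≤ (M : ℝ) - (K : ℝ) / 2 := by linarith
  have ht2 : |t + (k : ℝ)| ≤ (M : ℝ) - (K : ℝ) / 2 := by
    calc |t + (k : ℝ)| ≤ |t| + |(k : ℝ)| := abs_add_le _ _
      _ ≤ (M : ℝ) - (K : ℝ) / 2 := by linarith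
  have hN : ((2 * M + 1 : ℕ) : ℂ) ≠ 0 := by
    exact Nat.cast_ne_zero.mpr (Nat.succ_ne_zero _)
  unfold aloPulse
  rw [if_pos ht2, if_pos ht1]
  congr 1
  refine Finset.sum_congr rfl fun l hl => ?_
  have hcast : ((((l : ℝ) / ((2 * M + 1 : ℕ) : ℝ)) : ℝ) : ℂ)
      = (l : ℂ) / ((2 * M + 1 : ℕ) : ℂ) := by push_cast; ring
  rw [zak_shift, hcast]
  have he : -2 * (Real.pi : ℂ) * Complex.I * (k : ℂ) * (l : ℂ) / ((2 * M + 1 : ℕ) : ℂ)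
      + 2 * (Real.pi : ℂ) * Complex.I * (k : ℂ) * ((l : ℂ) / ((2 * M + 1 : ℕ) : ℂ)) = 0 := by
    field_simp
    ring
  rw [← mul_assoc, ← Complex.exp_add, he, Complex.exp_zero, one_mul]
  norm_num
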